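/- Let R be a fusion ring with basis B faithfully graded by an abelian group G via surjective λ : B → G, and suppose B is generated by elements X₁, …, Xₙ. Then the exponent of G divides the least common multiple of the orders of X₁, …, Xₙ. In particular, if B is generated by self-dual elements, then G is an elementary abelian 2-group. -/

import Mathlib

open Finset

structure FusionData (B : Type) [Fintype B] [DecidableEq B] where
  one : B
  star : B → B
  N : B → B → B → ℕ
  N_one_left : ∀ X Y : B, N one X Y = if Y = X then 1 else 0
  N_one_right : ∀ X Y : B, N X one Y = if Y = X then 1 else 0
  mult_one : ∀ X Y : B, N X Y one = if Y = star X then 1 else 0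
  star_involutive : ∀ X : B, star (star X) = X
  assoc : ∀ X Y Z W : B, ∑ T : B, N X Y T * N T Z W = ∑ T : B, N Y Z T * N X T W
  frob : ∀ X Y Z : B, N X Y Z = N (star X) Z Y

variable {B : Type} [Fintype B] [DecidableEq B]

/-- Multiplicity of `Y` in the `n`-th tensor power of `X`. -/
def FusionData.powMult (F : FusionData B) (X : B) : ℕ → B → ℕ
  | 0, Y => if Y = F.one then 1 else 0
  | n + 1, Y => ∑ Z : B, F.powMult X n Z * F.N Z X Y

/-- The order of a basis element: least `n ≥ 1` with `1` appearing in `Xⁿ`. -/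
noncomputable def FusionData.ord (F : FusionData B) (X : B) : ℕ :=
  sInf {n : ℕ | 1 ≤ n ∧ 0 < F.powMult X n F.one}

/-- `X` is faithful: every basis element appears in some power of `X`. -/
def FusionData.Faithful (F : FusionData B) (X : B) : Prop :=
  ∀ Y : B, ∃ n : ℕ, 1 ≤ n ∧ 0 < F.powMult X n Y

/-- Multiplicity of `Y` in the product of a list of basis elements. -/
def FusionData.prodMult (F : FusionData B) : List B → B → ℕ
  | [], Y => if Y = F.one then 1 else 0
  | X :: l, Y => ∑ Z : B, F.N X Z Y * FusionData.prodMult F l Z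

/-- A grading of the fusion ring by a group `G`. -/
def FusionData.IsGrading (F : FusionData B) {G : Type} [Group G] (lam : B → G) : Prop :=
  (∀ X : B, lam (F.star X) = (lam X)⁻¹) ∧
  (∀ X Y Z : B, 0 < F.N X Y Z → lam Z = lam X * lam Y)

section Aux

variable {G : Type} [CommGroup G]

lemma lam_one_eq (F : FusionData B) (lam : B → G) (hgr : F.IsGrading lam) :
    lam F.one = 1 := by
  have h : 0 < F.N F.one F.one F.one := by simp [F.N_one_left]
  have h2 := hgr.2 _ _ _ h
  have : lam F.one * lam F.one = lam F.one * 1 := by rw [mul_one, ← h2]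
  exact mul_left_cancel this

lemma lam_powMult (F : FusionData B) (lam : B → G) (hgr : F.IsGrading lam) (X : B) :
    ∀ n Y, 0 < F.powMult X n Y → lam Y = lam X ^ n := by
  intro n
  induction n with
  | zero =>
    intro Y h
    simp only [FusionData.powMult] at h
    split at h
    · subst ‹Y = F.one›; simp [lam_one_eq F lam hgr]
    · simp at h
  | succ n ih =>
    intro Y h
    simp only [FusionData.powMult] at h
    obtain ⟨Z, _, hZ⟩ : ∃ Z ∈ Finset.univ, 0 < F.powMult X n Z * F.N Z X Y := by
      by_contra hc
      push_neg at hc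
      have : ∑ Z : B, F.powMult X n Z * F.N Z X Y = 0 :=
        Finset.sum_eq_zero fun Z hZ => Nat.le_antisymm (hc Z hZ) (Nat.zero_le _)
      omega
    have h1 : 0 < F.powMult X n Z := Nat.pos_of_ne_zero fun h0 => by simp [h0] at hZ
    have h2 : 0 < F.N Z X Y := Nat.pos_of_ne_zero fun h0 => by simp [h0] at hZ
    rw [hgr.2 _ _ _ h2, ih Z h1, pow_succ]

lemma lam_pow_ord (F : FusionData B) (lam : B → G) (hgr : F.IsGrading lam) (X : B) :
    lam X ^ F.ord X = 1 := by
  by_cases hne : {n : ℕ | 1 ≤ n ∧ 0 < F.powMult X n F.one}.Nonempty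
  · have hmem := Nat.sInf_mem hne
    have := lam_powMult F lam hgr X _ _ hmem.2
    rw [lam_one_eq F lam hgr] at this
    exact this.symm
  · rw [Set.not_nonempty_iff_eq_empty] at hne
    simp [FusionData.ord, hne]

lemma lam_prodMult (F : FusionData B) (lam : B → G) (hgr : F.IsGrading lam) :
    ∀ (l : List B) (Y : B), 0 < F.prodMult l Y → lam Y = (l.map lam).prod := by
  intro l
  induction l with
  | nil =>
    intro Y h
    simp only [FusionData.prodMult] at h
    split at h
    · subst ‹Y = F.one›; simp [lam_one_eq F lam hgr]
    · simp at h
  | cons X l ih =>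
    intro Y h
    simp only [FusionData.prodMult] at h
    obtain ⟨Z, _, hZ⟩ : ∃ Z ∈ Finset.univ, 0 < F.N X Z Y * F.prodMult l Z := by
      by_contra hc
      push_neg at hc
      have : ∑ Z : B, F.N X Z Y * F.prodMult l Z = 0 :=
        Finset.sum_eq_zero fun Z hZ => Nat.le_antisymm (hc Z hZ) (Nat.zero_le _)
      omega
    have h1 : 0 < F.N X Z Y := Nat.pos_of_ne_zero fun h0 => by simp [h0] at hZ
    have h2 : 0 < F.prodMult l Z := Nat.pos_of_ne_zero fun h0 => by simp [h0] at hZ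
    rw [hgr.2 _ _ _ h1, ih Z h2]
    simp

lemma prod_pow_eq_one (n : ℕ) : ∀ (l : List G), (∀ x ∈ l, x ^ n = 1) →
    l.prod ^ n = 1 := by
  intro l
  induction l with
  | nil => simp
  | cons a l ih =>
    intro h
    rw [List.prod_cons, mul_pow, h a List.mem_cons_self,
      ih fun x hx => h x (List.mem_cons_of_mem a hx), one_mul]

end Aux

/-- the exponent of the (abelian) grading group divides the lcm of the
orders of generating basis elements; in particular, generation by self-dual elements
forces an elementary abelian 2-group. -/
theorem exponent_dvd_lcm_orders {G : Type} [CommGroup G] (F : FusionData B)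
    (lam : B → G) (hgr : F.IsGrading lam) (hsurj : Function.Surjective lam)
    (S : Finset B)
    (hgen : ∀ Y : B, ∃ l : List B, l ≠ [] ∧ (∀ x ∈ l, x ∈ S) ∧ 0 < F.prodMult l Y) :
    Monoid.exponent G ∣ S.lcm F.ord ∧
      ((∀ X ∈ S, F.star X = X) → ∀ g : G, g ^ 2 = 1) := by
  have key : ∀ n : ℕ, (∀ X ∈ S, lam X ^ n = 1) → ∀ g : G, g ^ n = 1 := by
    intro n hn g
    obtain ⟨Y, rfl⟩ := hsurj g
    obtain ⟨l, -, hl, hpos⟩ := hgen Y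
    rw [lam_prodMult F lam hgr l Y hpos]
    apply prod_pow_eq_one
    intro x hx
    obtain ⟨b, hb, rfl⟩ := List.mem_map.mp hx
    exact hn b (hl b hb)
  constructor
  · apply Monoid.exponent_dvd_of_forall_pow_eq_one
    apply key
    intro X hX
    obtain ⟨c, hc⟩ := Finset.dvd_lcm (f := F.ord) hX
    rw [hc, pow_mul, lam_pow_ord F lam hgr X, one_pow]
  · intro hsd
    apply key
    intro X hX
    have hN : 0 < F.N X X F.one := by simp [F.mult_one, hsd X hX]
    have := hgr.2 _ _ _ hN
    rw [lam_one_eq F lam hgr] at this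
    rw [pow_two, ← this]
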